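/- Let C be a finite set, σ₁,…,σ_k : C → C, and ⋈', ⋈ balanced equivalence relations on C with ⋈' refining ⋈. Then the relation on C/⋈' defined by [c]_{⋈'} ∼ [d]_{⋈'} iff c ⋈ d is a well-defined balanced equivalence relation for the quotient network (C/⋈', (σ_i^{⋈'})), and the quotient of C/⋈' by ∼ is isomorphic (as a network) to the quotient C/⋈. -/
import Mathlib

/-- if the balanced relation `s'` refines the balanced relation `s`,
then `s` induces a well-defined balanced equivalence relation `R` on the
quotient network `C/s'`, and the quotient of `C/s'` by `R` is isomorphic to
`C/s` (expressed via a surjection `φ` whose kernel is `R` and which commutes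
with the quotient network maps). -/
theorem stmt_4 {C : Type*} [Fintype C] {k : ℕ} (σ : Fin k → C → C)
    (s s' : Setoid C)
    (hbal : ∀ i c d, s.r c d → s.r (σ i c) (σ i d))
    (hbal' : ∀ i c d, s'.r c d → s'.r (σ i c) (σ i d))
    (href : ∀ c d, s'.r c d → s.r c d)
    (σ' : Fin k → Quotient s' → Quotient s')
    (hσ' : ∀ i c, σ' i (Quotient.mk s' c) = Quotient.mk s' (σ i c))
    (σq : Fin k → Quotient s → Quotient s)
    (hσq : ∀ i c, σq i (Quotient.mk s c) = Quotient.mk s (σ i c)) :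
    ∃ R : Quotient s' → Quotient s' → Prop,
      (∀ c d : C, R (Quotient.mk s' c) (Quotient.mk s' d) ↔ s.r c d) ∧
      Equivalence R ∧
      (∀ i x y, R x y → R (σ' i x) (σ' i y)) ∧
      ∃ φ : Quotient s' → Quotient s,
        Function.Surjective φ ∧ (∀ x y, R x y ↔ φ x = φ y) ∧
        ∀ i x, φ (σ' i x) = σq i (φ x) := by
  let φ : Quotient s' → Quotient s :=
    Quotient.lift (Quotient.mk s) (fun a b h => Quotient.sound (href a b h))
  have hφ : ∀ c : C, φ (Quotient.mk s' c) = Quotient.mk s c := fun c => rfl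
  refine ⟨fun x y => φ x = φ y, ?_, ?_, ?_, φ, ?_, fun x y => Iff.rfl, ?_⟩
  · intro c d
    simp only [hφ]
    exact ⟨fun h => Quotient.exact h, fun h => Quotient.sound h⟩
  · exact ⟨fun _ => rfl, Eq.symm, Eq.trans⟩
  · intro i x y h
    induction x using Quotient.ind
    induction y using Quotient.ind
    rename_i a b
    rw [hσ', hσ', hφ, hφ]
    exact Quotient.sound (hbal i a b (Quotient.exact (by rwa [hφ, hφ] at h)))
  · intro z
    induction z using Quotient.ind
    rename_i a
    exact ⟨Quotient.mk s' a, rfl⟩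
  · intro i x
    induction x using Quotient.ind
    rename_i a
    rw [hσ', hφ, hφ, hσq]
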